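/- Define φ : (0,∞)^d → ℝ by φ(t₁,…,t_d) = ∫_{S^{d−1}} f(t₁ω₁,…,t_dω_d) dμ(ω). Then there is a constant C > 0 (depending only on d and l) such that φ(t,…,t) ≤ C · t^{1 − d − l₁/2} for all t ∈ [1,∞). -/

import Mathlib

open MeasureTheory

namespace Stmt8

variable (d : ℕ) (l : Fin d → ℝ)

/-- `f(x) = ∏_{j=1}^d (1+|x_j|)^{−l_j/2}`. -/
noncomputable def f (x : EuclideanSpace ℝ (Fin d)) : ℝ :=
  ∏ j, (1 + |x j|) ^ (-(l j) / 2)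

/-- The Euclidean surface measure `μ` on the unit sphere `S^{d−1} ⊂ ℝ^d`. -/
noncomputable def sphμ : Measure (Metric.sphere (0 : EuclideanSpace ℝ (Fin d)) 1) :=
  (volume : Measure (EuclideanSpace ℝ (Fin d))).toSphere

/-- `φ(t₁,…,t_d) = ∫_{S^{d−1}} f(t₁ω₁,…,t_dω_d) dμ(ω)`. -/
noncomputable def phi (t : Fin d → ℝ) : ℝ :=
  ∫ ω : Metric.sphere (0 : EuclideanSpace ℝ (Fin d)) 1,
    f d l (WithLp.toLp 2 (fun j => t j * (ω : EuclideanSpace ℝ (Fin d)) j)) ∂(sphμ d)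

section Aux

open Set Real Metric
open scoped ENNReal

/-! ### One-dimensional integral estimates -/

lemma w_cont {p : ℝ} : Continuous (fun s : ℝ => (1+|s|) ^ (-p)) := by
  apply Continuous.rpow_const (by continuity)
  intro s; left; positivity

lemma w_nonneg {p : ℝ} (s : ℝ) : 0 ≤ (1+|s|) ^ (-p) := by positivity

lemma w_le_inv_one_add_sq {p : ℝ} (hp : 2 ≤ p) (s : ℝ) :
    (1+|s|) ^ (-p) ≤ (1 + s^2)⁻¹ := by
  have h1 : (1:ℝ) ≤ 1 + |s| := le_add_of_nonneg_right (abs_nonneg s)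
  have h2 : (1+|s|) ^ (-p) ≤ (1+|s|) ^ (-2 : ℝ) :=
    rpow_le_rpow_of_exponent_le h1 (by linarith)
  refine h2.trans ?_
  rw [rpow_neg (by positivity), show ((2:ℝ)) = ((2:ℕ):ℝ) by norm_num, rpow_natCast]
  apply inv_anti₀ (by positivity)
  have : s^2 = |s|^2 := (sq_abs s).symm
  nlinarith [abs_nonneg s]

lemma w_integrable {p : ℝ} (hp : 2 ≤ p) : Integrable (fun s : ℝ => (1+|s|) ^ (-p)) := by
  refine Integrable.mono integrable_inv_one_add_sq w_cont.aestronglyMeasurable ?_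
  filter_upwards with s
  rw [norm_of_nonneg (w_nonneg s), norm_of_nonneg (by positivity)]
  exact w_le_inv_one_add_sq hp s

lemma w_integral_le {p : ℝ} (hp : 2 ≤ p) : ∫ s : ℝ, (1+|s|) ^ (-p) ≤ 4 := by
  calc ∫ s : ℝ, (1+|s|) ^ (-p) ≤ ∫ s : ℝ, (1 + s^2)⁻¹ :=
        integral_mono (w_integrable hp) integrable_inv_one_add_sq (w_le_inv_one_add_sq hp)
    _ = π := integral_univ_inv_one_add_sq
    _ ≤ 4 := by linarith [pi_le_four]

lemma tail_integrableOn {p a : ℝ} (hp : 2 ≤ p) (ha : 0 < a) :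
    IntegrableOn (fun s : ℝ => (1+s) ^ (-p)) (Ici a) := by
  have : IntegrableOn (fun s : ℝ => (1+|s|) ^ (-p)) (Ici a) :=
    (w_integrable hp).integrableOn
  refine this.congr_fun (fun s hs => ?_) measurableSet_Ici
  dsimp only
  rw [abs_of_nonneg (le_trans ha.le hs)]

lemma tail_Ici {p a : ℝ} (hp : 2 ≤ p) (ha : 0 < a) :
    ∫ s in Ici a, (1+s) ^ (-p) ≤ a ^ (1-p) := by
  have hint : IntegrableOn (fun s : ℝ => s ^ (-p)) (Ici a) := by
    rw [integrableOn_Ici_iff_integrableOn_Ioi]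
    exact integrableOn_Ioi_rpow_of_lt (by linarith) ha
  have h1 : ∫ s in Ici a, (1+s) ^ (-p) ≤ ∫ s in Ici a, s ^ (-p) := by
    refine setIntegral_mono_on (tail_integrableOn hp ha) hint measurableSet_Ici ?_
    intro s hs
    exact rpow_le_rpow_of_nonpos (lt_of_lt_of_le ha hs) (by linarith) (by linarith)
  refine h1.trans ?_
  rw [integral_Ici_eq_integral_Ioi, integral_Ioi_rpow_of_lt (by linarith) ha]
  have : -a ^ (-p + 1) / (-p + 1) = a ^ (1-p) / (p - 1) := by
    rw [show (1:ℝ)-p = -p+1 by ring, div_eq_div_iff (by linarith) (by linarith)]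
    ring
  rw [this, div_le_iff₀ (by linarith)]
  nlinarith [rpow_pos_of_pos ha (1-p)]

lemma absSet_meas (a : ℝ) : MeasurableSet {x : ℝ | a ≤ |x|} :=
  measurableSet_le measurable_const (_root_.continuous_abs.measurable)

lemma wInd_integrable {p a : ℝ} (hp : 2 ≤ p) :
    Integrable (Set.indicator {x : ℝ | a ≤ |x|} (fun s : ℝ => (1+|s|) ^ (-p))) :=
  (w_integrable hp).indicator (absSet_meas a)

lemma wInd_nonneg {p a : ℝ} (s : ℝ) :
    0 ≤ Set.indicator {x : ℝ | a ≤ |x|} (fun s : ℝ => (1+|s|) ^ (-p)) s :=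
  Set.indicator_nonneg (fun u _ => w_nonneg u) s

lemma wInd_integral_le {p a : ℝ} (hp : 2 ≤ p) (ha : 0 < a) :
    ∫ s : ℝ, Set.indicator {x : ℝ | a ≤ |x|} (fun s : ℝ => (1+|s|) ^ (-p)) s
      ≤ 2 * a ^ (1-p) := by
  have hfun : ∀ s : ℝ, Set.indicator {x : ℝ | a ≤ |x|} (fun s : ℝ => (1+|s|) ^ (-p)) s
      = Set.indicator (Ici a) (fun v : ℝ => (1+v) ^ (-p)) |s| := by
    intro s
    by_cases h : a ≤ |s| <;> simp [Set.indicator, h]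
  calc ∫ s : ℝ, Set.indicator {x : ℝ | a ≤ |x|} (fun s : ℝ => (1+|s|) ^ (-p)) s
      = ∫ s : ℝ, Set.indicator (Ici a) (fun v : ℝ => (1+v) ^ (-p)) |s| := by
        simp_rw [hfun]
    _ = 2 * ∫ s in Ioi (0:ℝ), Set.indicator (Ici a) (fun v : ℝ => (1+v) ^ (-p)) s :=
        integral_comp_abs
    _ = 2 * ∫ s in Ici a, (1+s) ^ (-p) := by
        rw [setIntegral_indicator measurableSet_Ici,
          show Ioi (0:ℝ) ∩ Ici a = Ici a from
            inter_eq_self_of_subset_right (fun x hx => lt_of_lt_of_le ha hx)]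
    _ ≤ 2 * a ^ (1-p) := by linarith [tail_Ici hp ha]

/-! ### Polar coordinates lower bound -/

lemma polar_lower {d : ℕ} (hd : 1 ≤ d) (F : EuclideanSpace ℝ (Fin d) → ℝ≥0∞)
    (hF : Measurable F) {t : ℝ} (ht : 1 ≤ t)
    (hFmono : ∀ (ω : EuclideanSpace ℝ (Fin d)), ∀ r ∈ Ioo (t/2) t, F (t • ω) ≤ F (r • ω)) :
    (∫⁻ ω : sphere (0 : EuclideanSpace ℝ (Fin d)) 1, F (t • (ω : EuclideanSpace ℝ (Fin d)))
        ∂(volume : Measure (EuclideanSpace ℝ (Fin d))).toSphere)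
      * ENNReal.ofReal ((t/2)^d)
    ≤ ∫⁻ x, Set.indicator {x : EuclideanSpace ℝ (Fin d) | ‖x‖ ∈ Ioo (t/2) t} F x := by
  have ht2 : (0:ℝ) < t/2 := by linarith
  haveI : Nontrivial (EuclideanSpace ℝ (Fin d)) :=
    Module.nontrivial_of_finrank_pos (R := ℝ)
      (by rw [finrank_euclideanSpace_fin]; omega)
  set G : EuclideanSpace ℝ (Fin d) → ℝ≥0∞
    := Set.indicator {x : EuclideanSpace ℝ (Fin d) | ‖x‖ ∈ Ioo (t/2) t} F with hG
  have hSmeas : MeasurableSet {x : EuclideanSpace ℝ (Fin d) | ‖x‖ ∈ Ioo (t/2) t} :=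
    measurableSet_Ioo.preimage (continuous_norm.measurable)
  have hGmeas : Measurable G := hF.indicator hSmeas
  have hdim : Module.finrank ℝ (EuclideanSpace ℝ (Fin d)) = d := finrank_euclideanSpace_fin
  have MP := (volume : Measure (EuclideanSpace ℝ (Fin d))).measurePreserving_homeomorphUnitSphereProd
  have hmeas' : Measurable (fun y : sphere (0 : EuclideanSpace ℝ (Fin d)) 1 × Ioi (0:ℝ) =>
      G (((homeomorphUnitSphereProd (EuclideanSpace ℝ (Fin d))).symm y :
        ({0}ᶜ : Set (EuclideanSpace ℝ (Fin d)))) : EuclideanSpace ℝ (Fin d))) :=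
    hGmeas.comp (measurable_subtype_coe.comp (Homeomorph.measurable _))
  have key : ∫⁻ x, G x
      = ∫⁻ y : sphere (0 : EuclideanSpace ℝ (Fin d)) 1 × Ioi (0:ℝ),
          G (((homeomorphUnitSphereProd (EuclideanSpace ℝ (Fin d))).symm y :
            ({0}ᶜ : Set (EuclideanSpace ℝ (Fin d)))) : EuclideanSpace ℝ (Fin d))
          ∂((volume : Measure (EuclideanSpace ℝ (Fin d))).toSphere.prod
              (Measure.volumeIoiPow (Module.finrank ℝ (EuclideanSpace ℝ (Fin d)) - 1))) := by
    rw [← MP.lintegral_comp hmeas']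
    simp only [Homeomorph.symm_apply_apply]
    rw [lintegral_subtype_comap (measurableSet_singleton (0 : EuclideanSpace ℝ (Fin d))).compl,
      MeasureTheory.restrict_compl_singleton]
  rw [key, lintegral_prod _ hmeas'.aemeasurable]
  have inner : ∀ ω : sphere (0 : EuclideanSpace ℝ (Fin d)) 1,
      F (t • (ω : EuclideanSpace ℝ (Fin d))) * ENNReal.ofReal ((t/2)^d)
      ≤ ∫⁻ r : Ioi (0:ℝ),
          G (((homeomorphUnitSphereProd (EuclideanSpace ℝ (Fin d))).symm (ω, r) :
            ({0}ᶜ : Set (EuclideanSpace ℝ (Fin d)))) : EuclideanSpace ℝ (Fin d))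
          ∂(Measure.volumeIoiPow (Module.finrank ℝ (EuclideanSpace ℝ (Fin d)) - 1)) := by
    intro ω
    have hcoe : ∀ r : Ioi (0:ℝ),
        (((homeomorphUnitSphereProd (EuclideanSpace ℝ (Fin d))).symm (ω, r) :
          ({0}ᶜ : Set (EuclideanSpace ℝ (Fin d)))) : EuclideanSpace ℝ (Fin d))
          = (r:ℝ) • (ω : EuclideanSpace ℝ (Fin d)) := by
      intro r; simp
    simp only [hcoe]
    have hnorm : ∀ r : Ioi (0:ℝ), ‖(r:ℝ) • (ω : EuclideanSpace ℝ (Fin d))‖ = (r:ℝ) := by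
      intro r
      rw [norm_smul, mem_sphere_zero_iff_norm.1 ω.2, mul_one, Real.norm_eq_abs, abs_of_pos r.2]
    set sIoo : Set (Ioi (0:ℝ)) := Subtype.val ⁻¹' (Ioo (t/2) t) with hsIoo
    have hsIoomeas : MeasurableSet sIoo := measurable_subtype_coe measurableSet_Ioo
    have step1 : ∫⁻ _ in sIoo, F (t • (ω : EuclideanSpace ℝ (Fin d)))
          ∂(Measure.volumeIoiPow (Module.finrank ℝ (EuclideanSpace ℝ (Fin d)) - 1))
        ≤ ∫⁻ r : Ioi (0:ℝ), G ((r:ℝ) • (ω : EuclideanSpace ℝ (Fin d)))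
          ∂(Measure.volumeIoiPow (Module.finrank ℝ (EuclideanSpace ℝ (Fin d)) - 1)) := by
      rw [← lintegral_indicator hsIoomeas]
      apply lintegral_mono
      intro r
      dsimp only
      by_cases h : r ∈ sIoo
      · rw [Set.indicator_of_mem h, hG]
        have hmem : (r:ℝ) • (ω : EuclideanSpace ℝ (Fin d))
            ∈ {x : EuclideanSpace ℝ (Fin d) | ‖x‖ ∈ Ioo (t/2) t} := by
          rw [mem_setOf_eq, hnorm]; exact h
        rw [Set.indicator_of_mem hmem]
        exact hFmono _ (r:ℝ) h
      · rw [Set.indicator_of_notMem h]; exact zero_le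
    refine le_trans ?_ step1
    rw [setLIntegral_const]
    have hμ : ENNReal.ofReal ((t/2)^d)
        ≤ (Measure.volumeIoiPow (Module.finrank ℝ (EuclideanSpace ℝ (Fin d)) - 1)) sIoo := by
      rw [Measure.volumeIoiPow, withDensity_apply _ hsIoomeas]
      have hpt : ∀ r ∈ sIoo, ENNReal.ofReal ((t/2)^(d-1))
          ≤ ENNReal.ofReal ((r : Ioi (0:ℝ)).1 ^ (Module.finrank ℝ (EuclideanSpace ℝ (Fin d)) - 1)) := by
        intro r hr
        rw [hdim]
        exact ENNReal.ofReal_le_ofReal (pow_le_pow_left₀ ht2.le (le_of_lt hr.1) _)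
      calc ENNReal.ofReal ((t/2)^d)
          = ENNReal.ofReal ((t/2)^(d-1)) * ENNReal.ofReal (t/2) := by
            rw [← ENNReal.ofReal_mul (by positivity), ← pow_succ, Nat.sub_add_cancel hd]
        _ = ENNReal.ofReal ((t/2)^(d-1)) * (volume.comap Subtype.val) sIoo := by
            rw [comap_subtype_coe_apply measurableSet_Ioi volume sIoo, hsIoo,
              Subtype.image_preimage_coe,
              show Ioi (0:ℝ) ∩ Ioo (t/2) t = Ioo (t/2) t from
                inter_eq_self_of_subset_right (fun x hx => lt_trans ht2 hx.1),
              Real.volume_Ioo, show t - t/2 = t/2 by ring]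
        _ = ∫⁻ _ in sIoo, ENNReal.ofReal ((t/2)^(d-1)) ∂(volume.comap Subtype.val) := by
            rw [setLIntegral_const]
        _ ≤ ∫⁻ r in sIoo,
              ENNReal.ofReal ((r:ℝ) ^ (Module.finrank ℝ (EuclideanSpace ℝ (Fin d)) - 1))
              ∂(volume.comap Subtype.val) :=
            setLIntegral_mono ((measurable_subtype_coe.pow_const _).ennreal_ofReal) hpt
    exact mul_le_mul_right hμ _
  calc (∫⁻ ω : sphere (0 : EuclideanSpace ℝ (Fin d)) 1,
          F (t • (ω : EuclideanSpace ℝ (Fin d)))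
          ∂(volume : Measure (EuclideanSpace ℝ (Fin d))).toSphere)
        * ENNReal.ofReal ((t/2)^d)
      = ∫⁻ ω : sphere (0 : EuclideanSpace ℝ (Fin d)) 1,
          F (t • (ω : EuclideanSpace ℝ (Fin d))) * ENNReal.ofReal ((t/2)^d)
          ∂(volume : Measure (EuclideanSpace ℝ (Fin d))).toSphere := by
        have hsm : Measurable fun ω : sphere (0 : EuclideanSpace ℝ (Fin d)) 1 =>
            F (t • (ω : EuclideanSpace ℝ (Fin d))) := by
          apply hF.comp
          exact measurable_subtype_coe.const_smul t
        rw [lintegral_mul_const _ hsm]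
    _ ≤ _ := lintegral_mono fun ω => inner ω

/-! ### A large coordinate exists off a large ball -/

lemma exists_big_coord {d : ℕ} (hd : 1 ≤ d) {t : ℝ} (ht : 1 ≤ t)
    (x : EuclideanSpace ℝ (Fin d)) (hx : t/2 < ‖x‖) :
    ∃ k, t/(2*Real.sqrt d) ≤ |x k| := by
  have hd0 : (0:ℝ) < d := by exact_mod_cast Nat.pos_of_ne_zero (by omega)
  have hs : 0 < Real.sqrt d := Real.sqrt_pos.2 hd0
  have hs2 : Real.sqrt d ^ 2 = d := Real.sq_sqrt hd0.le
  have hne : (Finset.univ : Finset (Fin d)).Nonempty := ⟨⟨0,hd⟩, Finset.mem_univ _⟩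
  obtain ⟨k, -, hk⟩ := Finset.exists_max_image Finset.univ (fun j => |x j|) hne
  refine ⟨k, ?_⟩
  have hnorm : ‖x‖^2 = ∑ j, |x j|^2 := by
    rw [EuclideanSpace.norm_eq,
      Real.sq_sqrt (Finset.sum_nonneg fun j _ => sq_nonneg _)]
    simp [Real.norm_eq_abs]
  have hsum : ∑ j, |x j|^2 ≤ (d:ℝ) * |x k|^2 := by
    calc ∑ j, |x j|^2 ≤ ∑ _j : Fin d, |x k|^2 :=
          Finset.sum_le_sum fun j _ =>
            pow_le_pow_left₀ (abs_nonneg _) (hk j (Finset.mem_univ _)) 2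
      _ = (d:ℝ) * |x k|^2 := by
          rw [Finset.sum_const, Finset.card_univ, Fintype.card_fin, nsmul_eq_mul]
  have h1 : (t/2)^2 < (d:ℝ) * |x k|^2 := by nlinarith [norm_nonneg x]
  have h2 : (t/(2*Real.sqrt d))^2 = (t/2)^2 / d := by
    rw [div_pow, div_pow, mul_pow, hs2]
    ring
  have h3 : (t/(2*Real.sqrt d))^2 ≤ |x k|^2 := by
    rw [h2, div_le_iff₀ hd0]
    nlinarith
  nlinarith [abs_nonneg (x k), div_nonneg (by linarith : (0:ℝ) ≤ t) (by positivity : (0:ℝ) ≤ 2*Real.sqrt d)]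

/-! ### Step B : upper bound for the indicator integral -/

lemma stepB {d : ℕ} (hd : 1 ≤ d) {p a : ℝ} (hp : 2 ≤ p) (ha : 0 < a)
    {s : Set (EuclideanSpace ℝ (Fin d))}
    (hs : ∀ x ∈ s, ∃ k, a ≤ |x k|) :
    ∫⁻ x, Set.indicator s
        (fun x : EuclideanSpace ℝ (Fin d) => ENNReal.ofReal (∏ j, (1+|x j|) ^ (-p))) x
      ≤ ENNReal.ofReal ((d:ℝ) * (2 * a^(1-p) * 4^(d-1))) := by
  classical
  set wfun : ℝ → ℝ := fun s => (1+|s|) ^ (-p) with hwfun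
  set wInd : ℝ → ℝ := Set.indicator {x : ℝ | a ≤ |x|} wfun with hwInd
  set g : Fin d → Fin d → ℝ → ℝ := fun k j => if j = k then wInd else wfun with hg
  have hwfun_meas : Measurable wfun := w_cont.measurable
  have hwInd_meas : Measurable wInd := hwfun_meas.indicator (absSet_meas a)
  have hg_meas : ∀ k j, Measurable (g k j) := by
    intro k j; by_cases h : j = k <;> simp [hg, h, hwfun_meas, hwInd_meas]
  have hg_nonneg : ∀ k j s, 0 ≤ g k j s := by
    intro k j u
    by_cases h : j = k
    · simp only [hg, if_pos h]; exact wInd_nonneg u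
    · simp only [hg, if_neg h]; exact w_nonneg u
  have hg_int : ∀ k j, Integrable (g k j) := by
    intro k j; by_cases h : j = k <;> simp [hg, h, hwfun, hwInd, w_integrable hp, wInd_integrable hp]
  -- pointwise bound
  have hpt : ∀ x : EuclideanSpace ℝ (Fin d),
      Set.indicator s
        (fun x : EuclideanSpace ℝ (Fin d) => ENNReal.ofReal (∏ j, (1+|x j|) ^ (-p))) x
      ≤ ENNReal.ofReal (∑ k, ∏ j, g k j (x j)) := by
    intro x
    by_cases hx : x ∈ s
    · rw [Set.indicator_of_mem hx]
      apply ENNReal.ofReal_le_ofReal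
      obtain ⟨k, hk⟩ := hs x hx
      have hprod : ∏ j, (1+|x j|) ^ (-p) = ∏ j, g k j (x j) := by
        refine Finset.prod_congr rfl fun j _ => ?_
        by_cases h : j = k
        · subst h
          simp [hg, hwInd, Set.indicator_of_mem (show x j ∈ {u : ℝ | a ≤ |u|} from hk), hwfun]
        · simp [hg, h, hwfun]
      rw [hprod]
      exact Finset.single_le_sum
        (f := fun k => ∏ j, g k j (x j))
        (fun k _ => Finset.prod_nonneg fun j _ => hg_nonneg k j _) (Finset.mem_univ k)
    · rw [Set.indicator_of_notMem hx]; exact zero_le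
  have hmB : Measurable fun y : Fin d → ℝ => ENNReal.ofReal (∑ k, ∏ j, g k j (y j)) := by
    apply Measurable.ennreal_ofReal
    apply Finset.measurable_sum
    intro k _
    apply Finset.measurable_prod
    intro j _
    exact (hg_meas k j).comp (measurable_pi_apply j)
  have hBint : Integrable (fun y : Fin d → ℝ => ∑ k, ∏ j, g k j (y j)) :=
    integrable_finset_sum _ fun k _ =>
      Integrable.fintype_prod (f := fun j => g k j) fun j => hg_int k j
  calc ∫⁻ x, Set.indicator s
        (fun x : EuclideanSpace ℝ (Fin d) => ENNReal.ofReal (∏ j, (1+|x j|) ^ (-p))) x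
      ≤ ∫⁻ x : EuclideanSpace ℝ (Fin d), ENNReal.ofReal (∑ k, ∏ j, g k j (x j)) :=
        lintegral_mono hpt
    _ = ∫⁻ y : Fin d → ℝ, ENNReal.ofReal (∑ k, ∏ j, g k j (y j)) :=
        (EuclideanSpace.volume_preserving_symm_measurableEquiv_toLp (Fin d)).lintegral_comp hmB
    _ = ENNReal.ofReal (∫ y : Fin d → ℝ, ∑ k, ∏ j, g k j (y j)) :=
        (ofReal_integral_eq_lintegral_ofReal hBint
          (Filter.Eventually.of_forall fun y =>
            Finset.sum_nonneg fun k _ => Finset.prod_nonneg fun j _ => hg_nonneg k j _)).symm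
    _ ≤ ENNReal.ofReal ((d:ℝ) * (2 * a^(1-p) * 4^(d-1))) := by
        apply ENNReal.ofReal_le_ofReal
        rw [integral_finset_sum (μ := volume) _ fun k _ =>
          Integrable.fintype_prod (f := fun j => g k j) fun j => hg_int k j]
        have hterm : ∀ k : Fin d,
            (∫ y : Fin d → ℝ, ∏ j, g k j (y j)) ≤ 2 * a^(1-p) * 4^(d-1) := by
          intro k
          rw [integral_fintype_prod_volume_eq_prod (f := fun j => g k j)]
          rw [← Finset.mul_prod_erase Finset.univ _ (Finset.mem_univ k)]
          have hA : ∫ u, g k k u ≤ 2 * a^(1-p) := by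
            simp only [hg, if_pos rfl]
            exact wInd_integral_le hp ha
          have hB : ∏ j ∈ Finset.univ.erase k, ∫ u, g k j u ≤ 4^(d-1) := by
            calc ∏ j ∈ Finset.univ.erase k, ∫ u, g k j u
                ≤ ∏ _j ∈ Finset.univ.erase k, (4:ℝ) := by
                  refine Finset.prod_le_prod
                    (fun j _ => integral_nonneg fun u => hg_nonneg k j u) (fun j hj => ?_)
                  have hjk : j ≠ k := Finset.ne_of_mem_erase hj
                  simp only [hg, if_neg hjk]
                  exact w_integral_le hp
              _ = 4^(d-1) := by
                  rw [Finset.prod_const, Finset.card_erase_of_mem (Finset.mem_univ k),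
                    Finset.card_univ, Fintype.card_fin]
          calc (∫ u, g k k u) * ∏ j ∈ Finset.univ.erase k, ∫ u, g k j u
              ≤ (2 * a^(1-p)) * 4^(d-1) := by
                apply mul_le_mul hA hB
                · exact Finset.prod_nonneg fun j _ =>
                    integral_nonneg fun u => hg_nonneg k j u
                · positivity
            _ = 2 * a^(1-p) * 4^(d-1) := by ring
        calc ∑ k, ∫ y : Fin d → ℝ, ∏ j, g k j (y j)
            ≤ ∑ _k : Fin d, (2 * a^(1-p) * 4^(d-1)) := Finset.sum_le_sum fun k _ => hterm k
          _ = (d:ℝ) * (2 * a^(1-p) * 4^(d-1)) := by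
              rw [Finset.sum_const, Finset.card_univ, Fintype.card_fin, nsmul_eq_mul]

/-! ### Final real-number computation -/

lemma real_calc {d : ℕ} (hd : 1 ≤ d) {p t : ℝ} (hp : 2 ≤ p) (ht : 1 ≤ t) :
    (d:ℝ) * (2 * (t/(2*Real.sqrt d))^(1-p) * 4^(d-1)) / (t/2)^d
      ≤ ((d:ℝ) * (2 * (2*Real.sqrt d)^(p-1) * 4^(d-1)) * 2^d) * t^(1-(d:ℝ)-p) := by
  have ht0 : (0:ℝ) < t := by linarith
  have hd0 : (0:ℝ) < d := by exact_mod_cast Nat.pos_of_ne_zero (by omega)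
  have hs : 0 < Real.sqrt d := Real.sqrt_pos.2 hd0
  have hD : (0:ℝ) < 2*Real.sqrt d := by positivity
  have h1 : (t/(2*Real.sqrt d))^(1-p) = t^(1-p) * (2*Real.sqrt d)^(p-1) := by
    rw [Real.div_rpow ht0.le hD.le, div_eq_mul_inv]
    congr 1
    rw [show (p:ℝ)-1 = -(1-p) by ring, Real.rpow_neg hD.le]
  have h2 : (t/2)^d = t^((d:ℝ)) / 2^d := by
    rw [div_pow, Real.rpow_natCast]
  have h3 : t^(1-(d:ℝ)-p) = t^(1-p) / t^((d:ℝ)) := by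
    rw [← Real.rpow_sub ht0]
    ring_nf
  have htd : (0:ℝ) < t^((d:ℝ)) := Real.rpow_pos_of_pos ht0 _
  have htp : (0:ℝ) < t^(1-p) := Real.rpow_pos_of_pos ht0 _
  have hDp : (0:ℝ) < (2*Real.sqrt d)^(p-1) := Real.rpow_pos_of_pos hD _
  apply le_of_eq
  rw [h1, h2, h3]
  field_simp

end Aux

open Set Real Metric
open scoped ENNReal

theorem statement8 (hd : 1 ≤ d) (hl4 : ∀ j, 4 ≤ l j) (hmono : Monotone l) :
    ∃ C > (0 : ℝ), ∀ t : ℝ, 1 ≤ t →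
      phi d l (fun _ => t) ≤ C * t ^ (1 - (d : ℝ) - l ⟨0, hd⟩ / 2) := by
  set p : ℝ := l ⟨0, hd⟩ / 2 with hp_def
  have hp2 : (2:ℝ) ≤ p := by
    have := hl4 ⟨0, hd⟩
    rw [hp_def]; linarith
  have hd0 : (0:ℝ) < d := by exact_mod_cast Nat.pos_of_ne_zero (by omega)
  have hs : 0 < Real.sqrt d := Real.sqrt_pos.2 hd0
  have hDp : (0:ℝ) < (2*Real.sqrt d)^(p-1) := Real.rpow_pos_of_pos (by positivity) _
  refine ⟨(d:ℝ) * (2 * (2*Real.sqrt d)^(p-1) * 4^(d-1)) * 2^d, by positivity, ?_⟩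
  intro t ht
  have ht0 : (0:ℝ) < t := by linarith
  have ht2 : (0:ℝ) < t/2 := by linarith
  set a : ℝ := t/(2*Real.sqrt d) with ha_def
  have ha : 0 < a := by positivity
  -- the ENNReal-valued comparison function
  set F : EuclideanSpace ℝ (Fin d) → ℝ≥0∞ :=
    fun x => ENNReal.ofReal (∏ j, (1+|x j|) ^ (-p)) with hF_def
  have hFmeas : Measurable F := by
    apply Measurable.ennreal_ofReal
    apply Finset.measurable_prod
    intro j _
    exact w_cont.measurable.comp (EuclideanSpace.proj j).continuous.measurable
  -- continuity and nonnegativity of f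
  have hfnonneg : ∀ x, 0 ≤ f d l x := fun x =>
    Finset.prod_nonneg fun j _ => Real.rpow_nonneg (by positivity) _
  have hfcont : Continuous (f d l) := by
    apply continuous_finset_prod
    intro j _
    apply Continuous.rpow_const
    · exact continuous_const.add (continuous_abs.comp (EuclideanSpace.proj j).continuous)
    · intro x; left; positivity
  -- rewrite phi as a lower Lebesgue integral
  have hphi : phi d l (fun _ => t)
      = (∫⁻ ω : sphere (0:EuclideanSpace ℝ (Fin d)) 1,
          ENNReal.ofReal (f d l (t • (ω : EuclideanSpace ℝ (Fin d)))) ∂(sphμ d)).toReal :=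
    integral_eq_lintegral_of_nonneg_ae (μ := sphμ d)
      (f := fun ω : sphere (0:EuclideanSpace ℝ (Fin d)) 1 => f d l (t • (ω : EuclideanSpace ℝ (Fin d))))
      (Filter.Eventually.of_forall fun ω => hfnonneg _)
      ((hfcont.comp (continuous_subtype_val.const_smul t)).aestronglyMeasurable)
  -- pointwise domination of f by the p-homogeneous product
  have hfp : ∀ x : EuclideanSpace ℝ (Fin d),
      ENNReal.ofReal (f d l x) ≤ F x := by
    intro x
    apply ENNReal.ofReal_le_ofReal
    refine Finset.prod_le_prod (fun j _ => Real.rpow_nonneg (by positivity) _) (fun j _ => ?_)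
    apply Real.rpow_le_rpow_of_exponent_le (le_add_of_nonneg_right (abs_nonneg _))
    have hmj : l ⟨0, hd⟩ ≤ l j := hmono (by simp [Fin.le_def])
    rw [hp_def]; linarith
  -- monotonicity hypothesis for the polar lemma
  have hFmono : ∀ (ω : EuclideanSpace ℝ (Fin d)), ∀ r ∈ Ioo (t/2) t,
      F (t • ω) ≤ F (r • ω) := by
    intro ω r hr
    apply ENNReal.ofReal_le_ofReal
    refine Finset.prod_le_prod (fun j _ => Real.rpow_nonneg (by positivity) _) (fun j _ => ?_)
    have h0r : 0 < r := lt_trans ht2 hr.1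
    have habs : |r * ω j| ≤ |t * ω j| := by
      rw [abs_mul, abs_mul, abs_of_pos h0r, abs_of_pos ht0]
      exact mul_le_mul_of_nonneg_right hr.2.le (abs_nonneg _)
    have : (t • ω) j = t * ω j := rfl
    have : (r • ω) j = r * ω j := rfl
    apply Real.rpow_le_rpow_of_nonpos (by positivity)
      (by simpa using add_le_add_left habs 1) (by linarith)
  -- polar lower bound
  have hpolar := polar_lower hd F hFmeas ht hFmono
  -- Step B upper bound
  have hstepB := stepB hd hp2 ha
    (s := {x : EuclideanSpace ℝ (Fin d) | ‖x‖ ∈ Ioo (t/2) t})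
    (fun x hx => exists_big_coord hd ht x hx.1)
  have hchain : (∫⁻ ω : sphere (0:EuclideanSpace ℝ (Fin d)) 1,
        F (t • (ω : EuclideanSpace ℝ (Fin d)))
        ∂(volume : Measure (EuclideanSpace ℝ (Fin d))).toSphere)
      * ENNReal.ofReal ((t/2)^d)
      ≤ ENNReal.ofReal ((d:ℝ) * (2 * a^(1-p) * 4^(d-1))) :=
    le_trans hpolar hstepB
  have hdiv : (∫⁻ ω : sphere (0:EuclideanSpace ℝ (Fin d)) 1,
        F (t • (ω : EuclideanSpace ℝ (Fin d)))
        ∂(volume : Measure (EuclideanSpace ℝ (Fin d))).toSphere)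
      ≤ ENNReal.ofReal ((d:ℝ) * (2 * a^(1-p) * 4^(d-1)) / (t/2)^d) := by
    rw [ENNReal.ofReal_div_of_pos (by positivity)]
    rw [ENNReal.le_div_iff_mul_le
      (Or.inl (by simp [ENNReal.ofReal_pos]; positivity))
      (Or.inl ENNReal.ofReal_ne_top)]
    exact hchain
  -- final estimate
  have hfinal : (∫⁻ ω : sphere (0:EuclideanSpace ℝ (Fin d)) 1,
        ENNReal.ofReal (f d l (t • (ω : EuclideanSpace ℝ (Fin d)))) ∂(sphμ d))
      ≤ ENNReal.ofReal
          (((d:ℝ) * (2 * (2*Real.sqrt d)^(p-1) * 4^(d-1)) * 2^d) * t^(1-(d:ℝ)-p)) := by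
    refine le_trans (lintegral_mono fun ω => hfp _) ?_
    refine le_trans ?_ (ENNReal.ofReal_le_ofReal (real_calc hd hp2 ht))
    exact hdiv
  rw [hphi]
  have hCpos : (0:ℝ) ≤ ((d:ℝ) * (2 * (2*Real.sqrt d)^(p-1) * 4^(d-1)) * 2^d) * t^(1-(d:ℝ)-p) := by
    positivity
  exact ENNReal.toReal_le_of_le_ofReal hCpos hfinal

end Stmt8
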